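/- arXiv:1312.2369 — 4 statements merged into one kernel-verified Lean document; each statement's English description precedes it below -/
import Mathlib

section
/- Let (Ω, μ) be a probability space, θ ≥ 0, N : Ω → ℕ a random variable with Poisson(θ) law, i.e. μ({N = n}) = e^{−θ} θ^n / n! for every n, and (Y_i)_{i∈ℕ} real-valued random variables such that the family (N, Y_0, Y_1, …) is mutually independent and the Y_i are identically distributed with common cumulative distribution function F(t) = μ({Y_0 ≤ t}). Then for every t ∈ ℝ, μ({ω : Y_i(ω) > t for every i < N(ω)}) = exp(−θ F(t)). -/
open MeasureTheory ProbabilityTheory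

/-- Promotion time cure model: if `N` has a Poisson(θ) law, the `Y_i` are identically
distributed with cumulative distribution function `F(t) = μ({Y₀ ≤ t})`, and the family
`(N, Y₀, Y₁, …)` is mutually independent, then for every `t`,
`μ({ω : Y_i(ω) > t for every i < N(ω)}) = exp(−θ F(t))`. -/
theorem promotion_time_survival {Ω : Type*} [MeasurableSpace Ω] (μ : Measure Ω)
    [IsProbabilityMeasure μ] (θ : ℝ) (hθ : 0 ≤ θ)
    (N : Ω → ℕ) (Y : ℕ → Ω → ℝ) (hNmeas : Measurable N) (hYmeas : ∀ i, Measurable (Y i))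
    (hlaw : ∀ n : ℕ, μ {ω | N ω = n} = ENNReal.ofReal (Real.exp (-θ) * θ ^ n / n.factorial))
    (hident : ∀ i : ℕ, ∀ t : ℝ, μ {ω | Y i ω ≤ t} = μ {ω | Y 0 ω ≤ t})
    (hindep : iIndepFun (m :=
      fun j : Option ℕ => Option.rec (motive := fun j : Option ℕ =>
          MeasurableSpace (Option.rec (motive := fun _ => Type) ℕ (fun _ => ℝ) j))
        (inferInstance : MeasurableSpace ℕ) (fun _ => (inferInstance : MeasurableSpace ℝ)) j)
      (fun j : Option ℕ => Option.rec (motive := fun j : Option ℕ =>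
          Ω → Option.rec (motive := fun _ => Type) ℕ (fun _ => ℝ) j)
        N (fun i => Y i) j) μ) :
    ∀ t : ℝ, μ {ω | ∀ i < N ω, t < Y i ω} =
      ENNReal.ofReal (Real.exp (-θ * (μ {ω | Y 0 ω ≤ t}).toReal)) := by
  intro t
  set F : ℝ := (μ {ω | Y 0 ω ≤ t}).toReal with hFdef
  have hFmeas : μ {ω | Y 0 ω ≤ t} = ENNReal.ofReal F := by
    rw [hFdef, ENNReal.ofReal_toReal (measure_ne_top μ _)]
  have hF0 : 0 ≤ F := ENNReal.toReal_nonneg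
  have hF1 : F ≤ 1 := by
    rw [hFdef]
    exact ENNReal.toReal_le_of_le_ofReal zero_le_one (by simpa using prob_le_one)
  set p : ℝ := 1 - F with hpdef
  have hp0 : 0 ≤ p := by simp [hpdef]; linarith
  -- survival probability of each Y i
  have hYi : ∀ i, μ {ω | t < Y i ω} = ENNReal.ofReal p := by
    intro i
    have hset : {ω | t < Y i ω} = {ω | Y i ω ≤ t}ᶜ := by
      ext ω; simp [not_le]
    rw [hset, measure_compl (measurableSet_le (hYmeas i) measurable_const)
      (measure_ne_top μ _), hident i t, hFmeas, measure_univ]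
    rw [hpdef, ENNReal.ofReal_sub _ hF0, ENNReal.ofReal_one]
  -- the events indexed by n
  set A : ℕ → Set Ω := fun n => {ω | N ω = n ∧ ∀ i < n, t < Y i ω} with hAdef
  have hAmeas : ∀ n, MeasurableSet (A n) := by
    intro n
    have : A n = (N ⁻¹' {n}) ∩ ⋂ i ∈ Finset.range n, {ω | t < Y i ω} := by
      ext ω; simp [hAdef]
    rw [this]
    exact (hNmeas (measurableSet_singleton n)).inter
      (Finset.measurableSet_biInter _ fun i _ => measurableSet_lt measurable_const (hYmeas i))
  have hAval : ∀ n : ℕ, μ (A n) =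
      ENNReal.ofReal (Real.exp (-θ) * (θ * p) ^ n / n.factorial) := by
    intro n
    classical
    set S : Finset (Option ℕ) := insert none ((Finset.range n).image some) with hSdef
    set sets : ∀ j : Option ℕ, Set (Option.rec (motive := fun _ => Type) ℕ (fun _ => ℝ) j) :=
      fun j => Option.rec (motive := fun j : Option ℕ =>
        Set (Option.rec (motive := fun _ => Type) ℕ (fun _ => ℝ) j))
        ({n} : Set ℕ) (fun _ => Set.Ioi t) j with hsets
    have h := hindep.measure_inter_preimage_eq_mul S (sets := sets)
      (fun j _ => match j with
        | none => measurableSet_singleton n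
        | some i => measurableSet_Ioi)
    have hnone : none ∉ (Finset.range n).image some := by simp
    have hsetEq : (⋂ j ∈ S, (Option.rec (motive := fun j : Option ℕ =>
          Ω → Option.rec (motive := fun _ => Type) ℕ (fun _ => ℝ) j)
        N (fun i => Y i) j) ⁻¹' sets j) = A n := by
      ext ω
      simp only [Set.mem_iInter, hAdef, Set.mem_setOf_eq]
      constructor
      · intro h
        refine ⟨h none (by simp [hSdef]), fun i hi => ?_⟩
        have := h (some i) (by simp [hSdef, hi])
        simpa [hsets] using this
      · rintro ⟨h1, h2⟩ j hj
        rw [hSdef] at hj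
        simp only [Finset.mem_insert, Finset.mem_image, Finset.mem_range] at hj
        rcases hj with rfl | ⟨i, hi, rfl⟩
        · simpa [hsets] using h1
        · simpa [hsets] using h2 i hi
      
    rw [hsetEq] at h
    rw [h, hSdef, Finset.prod_insert hnone,
      Finset.prod_image (fun a _ b _ h => Option.some_injective ℕ h)]
    have hN : (Option.rec (motive := fun j : Option ℕ =>
          Ω → Option.rec (motive := fun _ => Type) ℕ (fun _ => ℝ) j)
        N (fun i => Y i) none) ⁻¹' sets none = {ω | N ω = n} := by
      ext ω; simp [hsets]
    have hYpre : ∀ i, (Option.rec (motive := fun j : Option ℕ =>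
          Ω → Option.rec (motive := fun _ => Type) ℕ (fun _ => ℝ) j)
        N (fun i => Y i) (some i)) ⁻¹' sets (some i) = {ω | t < Y i ω} := by
      intro i; ext ω; simp [hsets]
    rw [hN, hlaw n]
    have hprod : ∏ i ∈ Finset.range n, μ ((Option.rec (motive := fun j : Option ℕ =>
          Ω → Option.rec (motive := fun _ => Type) ℕ (fun _ => ℝ) j)
        N (fun i => Y i) (some i)) ⁻¹' sets (some i)) = ENNReal.ofReal (p ^ n) := by
      calc _ = ∏ i ∈ Finset.range n, ENNReal.ofReal p := by
              refine Finset.prod_congr rfl fun i _ => ?_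
              rw [hYpre i, hYi i]
        _ = ENNReal.ofReal (p ^ n) := by
              rw [Finset.prod_const, Finset.card_range, ← ENNReal.ofReal_pow hp0]
    rw [hprod, ← ENNReal.ofReal_mul (by positivity)]
    congr 1
    rw [mul_pow]
    ring
  -- decompose the event
  have hUnion : {ω | ∀ i < N ω, t < Y i ω} = ⋃ n, A n := by
    ext ω
    simp only [Set.mem_setOf_eq, Set.mem_iUnion, hAdef]
    exact ⟨fun h => ⟨N ω, rfl, h⟩, fun ⟨n, hn, h⟩ i hi => h i (hn ▸ hi)⟩
  have hdisj : Pairwise (Function.onFun Disjoint A) := by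
    intro m n hmn
    simp only [Function.onFun, Set.disjoint_left, hAdef]
    rintro ω ⟨rfl, -⟩ ⟨rfl, -⟩
    exact hmn rfl
  rw [hUnion, measure_iUnion hdisj hAmeas]
  simp_rw [hAval]
  have hsummable : Summable (fun n : ℕ => Real.exp (-θ) * (θ * p) ^ n / n.factorial) := by
    simpa [mul_div_assoc] using (Real.summable_pow_div_factorial (θ * p)).mul_left (Real.exp (-θ))
  rw [← ENNReal.ofReal_tsum_of_nonneg (fun n => by positivity) hsummable]
  congr 1
  have htsum : ∑' n : ℕ, Real.exp (-θ) * (θ * p) ^ n / n.factorial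
      = Real.exp (-θ) * Real.exp (θ * p) := by
    rw [Real.exp_eq_exp_ℝ, NormedSpace.exp_eq_tsum_div, ← tsum_mul_left]
    simp [mul_div_assoc]
  rw [htsum, ← Real.exp_add]
  congr 1
  rw [hpdef]; ring
end

section
/- Let n, m ≥ 1. Let 𝒳 ⊆ ℝⁿ be such that the set {(1, x) : x ∈ 𝒳} spans ℝ × ℝⁿ, and 𝒵 ⊆ ℝᵐ be such that {(1, z) : z ∈ 𝒵} spans ℝ × ℝᵐ. Let β₀, β̃₀ ∈ ℝ, β, β̃ ∈ ℝⁿ, γ, γ̃ ∈ ℝᵐ, and let S₀, S̃₀ : ℝ → ℝ satisfy 0 ≤ S₀(t) ≤ 1 and 0 ≤ S̃₀(t) ≤ 1 for all t, S₀(t) → 0 and S̃₀(t) → 0 as t → ∞, and suppose there exists t₀ with 0 < S₀(t₀) < 1. If exp(β₀ + ⟨x, β⟩) · (1 − S₀(t)^{exp(⟨z, γ⟩)}) = exp(β̃₀ + ⟨x, β̃⟩) · (1 − S̃₀(t)^{exp(⟨z, γ̃⟩)}) for every x ∈ 𝒳, z ∈ 𝒵 and t ∈ ℝ, then β₀ =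 β̃₀, β = β̃, γ = γ̃, and S₀(t) = S̃₀(t) for all t. -/
open RealInnerProductSpace Filter

private lemma rpow_base_inj {a b p : ℝ} (ha : 0 ≤ a) (hb : 0 ≤ b) (hp : 0 < p)
    (h : a ^ p = b ^ p) : a = b := by
  rcases lt_trichotomy a b with h' | h' | h'
  · exact absurd h (ne_of_lt (Real.rpow_lt_rpow ha h' hp))
  · exact h'
  · exact absurd h.symm (ne_of_lt (Real.rpow_lt_rpow hb h' hp))

private lemma span_affine_zero {k : ℕ} {S : Set (EuclideanSpace ℝ (Fin k))}
    (hS : Submodule.span ℝ ((fun x => ((1 : ℝ), x)) '' S) = ⊤)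
    (c : ℝ) (v : EuclideanSpace ℝ (Fin k))
    (h : ∀ x ∈ S, c + ⟪x, v⟫ = 0) : c = 0 ∧ v = 0 := by
  set L : (ℝ × EuclideanSpace ℝ (Fin k)) →ₗ[ℝ] ℝ :=
    c • (LinearMap.fst ℝ ℝ _) +
      ((innerSL ℝ v).toLinearMap).comp (LinearMap.snd ℝ ℝ _) with hL
  have hker : Submodule.span ℝ ((fun x => ((1 : ℝ), x)) '' S) ≤ LinearMap.ker L := by
    rw [Submodule.span_le]
    rintro _ ⟨x, hx, rfl⟩
    have := h x hx
    simp only [SetLike.mem_coe, LinearMap.mem_ker, hL, LinearMap.add_apply,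
      LinearMap.smul_apply, LinearMap.fst_apply, LinearMap.comp_apply,
      LinearMap.snd_apply, ContinuousLinearMap.coe_coe, innerSL_apply_apply, smul_eq_mul,
      mul_one]
    rw [real_inner_comm] at this
    linarith
  rw [hS] at hker
  have hLzero : ∀ p : ℝ × EuclideanSpace ℝ (Fin k), L p = 0 := fun p =>
    hker (Submodule.mem_top) 
  have hc : c = 0 := by
    have := hLzero (1, 0)
    simpa [hL] using this
  refine ⟨hc, ?_⟩
  have hv := hLzero (0, v)
  simp only [hL, LinearMap.add_apply, LinearMap.smul_apply, LinearMap.fst_apply,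
    LinearMap.comp_apply, LinearMap.snd_apply, ContinuousLinearMap.coe_coe,
    innerSL_apply_apply, smul_eq_mul, mul_zero, zero_add] at hv
  exact inner_self_eq_zero.mp hv

/-- Part 1 of the paper's Lemma 1: identifiability of the promotion time cure model
when the follow up is sufficiently long.  If
`exp(β₀+⟨x,β⟩)(1 − S₀(t)^{exp(⟨z,γ⟩)}) = exp(β̃₀+⟨x,β̃⟩)(1 − S̃₀(t)^{exp(⟨z,γ̃⟩)})`
for all `x ∈ 𝒳`, `z ∈ 𝒵`, `t`, where the designs span and the baseline cumulative
distributions are proper, then all parameters coincide. -/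
theorem promotion_time_identifiability (n m : ℕ) (hn : 1 ≤ n) (hm : 1 ≤ m)
    (X : Set (EuclideanSpace ℝ (Fin n))) (Z : Set (EuclideanSpace ℝ (Fin m)))
    (hX : Submodule.span ℝ ((fun x => ((1 : ℝ), x)) '' X) = ⊤)
    (hZ : Submodule.span ℝ ((fun z => ((1 : ℝ), z)) '' Z) = ⊤)
    (β₀ β₀' : ℝ) (β β' : EuclideanSpace ℝ (Fin n)) (γ γ' : EuclideanSpace ℝ (Fin m))
    (S₀ S₀' : ℝ → ℝ)
    (hS₀ : ∀ t, 0 ≤ S₀ t ∧ S₀ t ≤ 1) (hS₀' : ∀ t, 0 ≤ S₀' t ∧ S₀' t ≤ 1)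
    (hlim : Tendsto S₀ atTop (nhds 0)) (hlim' : Tendsto S₀' atTop (nhds 0))
    (ht₀ : ∃ t₀ : ℝ, 0 < S₀ t₀ ∧ S₀ t₀ < 1)
    (heq : ∀ x ∈ X, ∀ z ∈ Z, ∀ t : ℝ,
      Real.exp (β₀ + ⟪x, β⟫) * (1 - S₀ t ^ Real.exp ⟪z, γ⟫) =
      Real.exp (β₀' + ⟪x, β'⟫) * (1 - S₀' t ^ Real.exp ⟪z, γ'⟫)) :
    β₀ = β₀' ∧ β = β' ∧ γ = γ' ∧ ∀ t, S₀ t = S₀' t := by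
  obtain ⟨t₀, ht₀1, ht₀2⟩ := ht₀
  -- nonemptiness of X and Z
  have hXne : X.Nonempty := by
    rcases X.eq_empty_or_nonempty with h | h
    · rw [h] at hX
      simp only [Set.image_empty, Submodule.span_empty] at hX
      exact absurd hX bot_ne_top
    · exact h
  have hZne : Z.Nonempty := by
    rcases Z.eq_empty_or_nonempty with h | h
    · rw [h] at hZ
      simp only [Set.image_empty, Submodule.span_empty] at hZ
      exact absurd hZ bot_ne_top
    · exact h
  obtain ⟨x₀, hx₀⟩ := hXne
  obtain ⟨z₀, hz₀⟩ := hZne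
  -- auxiliary: the rpow terms tend to 0 as t → ∞
  have htend : ∀ (S : ℝ → ℝ), Tendsto S atTop (nhds 0) → ∀ p : ℝ, 0 < p →
      Tendsto (fun t => S t ^ p) atTop (nhds 0) := by
    intro S hS p hp
    have hc := (Real.continuousAt_rpow_const 0 p (Or.inr hp.le)).tendsto
    have := hc.comp hS
    simpa [Function.comp_def, Real.zero_rpow hp.ne'] using this
  -- Step A: equality of the exponential factors
  have hβeq : ∀ x ∈ X, β₀ + ⟪x, β⟫ = β₀' + ⟪x, β'⟫ := by
    intro x hx
    have h1 : Tendsto (fun t => Real.exp (β₀ + ⟪x, β⟫) * (1 - S₀ t ^ Real.exp ⟪z₀, γ⟫))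
        atTop (nhds (Real.exp (β₀ + ⟪x, β⟫))) := by
      have := ((tendsto_const_nhds (α := ℝ) (x := (1 : ℝ)) (f := atTop)).sub
        (htend S₀ hlim (Real.exp ⟪z₀, γ⟫) (Real.exp_pos _))).const_mul (Real.exp (β₀ + ⟪x, β⟫))
      simpa using this
    have h2 : Tendsto (fun t => Real.exp (β₀' + ⟪x, β'⟫) * (1 - S₀' t ^ Real.exp ⟪z₀, γ'⟫))
        atTop (nhds (Real.exp (β₀' + ⟪x, β'⟫))) := by
      have := ((tendsto_const_nhds (α := ℝ) (x := (1 : ℝ)) (f := atTop)).sub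
        (htend S₀' hlim' (Real.exp ⟪z₀, γ'⟫) (Real.exp_pos _))).const_mul (Real.exp (β₀' + ⟪x, β'⟫))
      simpa using this
    have h3 : (fun t => Real.exp (β₀ + ⟪x, β⟫) * (1 - S₀ t ^ Real.exp ⟪z₀, γ⟫)) =
        (fun t => Real.exp (β₀' + ⟪x, β'⟫) * (1 - S₀' t ^ Real.exp ⟪z₀, γ'⟫)) :=
      funext fun t => heq x hx z₀ hz₀ t
    have := tendsto_nhds_unique (h3 ▸ h1) h2
    exact Real.exp_eq_exp.mp this
  -- Step B: identify β₀ and β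
  have hβ : β₀ - β₀' = 0 ∧ β - β' = 0 := by
    apply span_affine_zero hX
    intro x hx
    have := hβeq x hx
    rw [inner_sub_right]
    linarith
  have hβ₀eq : β₀ = β₀' := sub_eq_zero.mp hβ.1
  have hβveq : β = β' := sub_eq_zero.mp hβ.2
  -- Step C: cancel the exponential factor
  have hC : ∀ z ∈ Z, ∀ t : ℝ, S₀ t ^ Real.exp ⟪z, γ⟫ = S₀' t ^ Real.exp ⟪z, γ'⟫ := by
    intro z hz t
    have h := heq x₀ hx₀ z hz t
    rw [hβ₀eq, hβveq] at h
    have := mul_left_cancel₀ (Real.exp_ne_zero _) h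
    linarith
  -- Step D: S₀' t₀ is also strictly between 0 and 1
  have hL1 : 0 < S₀ t₀ ^ Real.exp ⟪z₀, γ⟫ := Real.rpow_pos_of_pos ht₀1 _
  have hL2 : S₀ t₀ ^ Real.exp ⟪z₀, γ⟫ < 1 :=
    Real.rpow_lt_one (hS₀ t₀).1 ht₀2 (Real.exp_pos _)
  have hS't₀pos : 0 < S₀' t₀ := by
    rcases (hS₀' t₀).1.lt_or_eq with h | h
    · exact h
    · exfalso
      have hc := hC z₀ hz₀ t₀
      rw [← h, Real.zero_rpow (Real.exp_pos _).ne'] at hc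
      exact hL1.ne' hc
  have hS't₀lt : S₀' t₀ < 1 := by
    rcases (hS₀' t₀).2.lt_or_eq with h | h
    · exact h
    · exfalso
      have hc := hC z₀ hz₀ t₀
      rw [h, Real.one_rpow] at hc
      exact (ne_of_lt hL2) hc
  set a : ℝ := Real.log (S₀ t₀) with ha
  set a' : ℝ := Real.log (S₀' t₀) with ha'
  have haneg : a < 0 := Real.log_neg ht₀1 ht₀2
  have ha'neg : a' < 0 := Real.log_neg hS't₀pos hS't₀lt
  have hkey : ∀ z ∈ Z, Real.exp ⟪z, γ⟫ * a = Real.exp ⟪z, γ'⟫ * a' := by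
    intro z hz
    have h := congrArg Real.log (hC z hz t₀)
    rwa [Real.log_rpow ht₀1, Real.log_rpow hS't₀pos] at h
  -- from the key relation: ⟪z, γ − γ'⟫ is a constant on Z
  set d : ℝ := Real.log (a' / a) with hd
  have hconst : ∀ z ∈ Z, ⟪z, γ - γ'⟫ = d := by
    intro z hz
    have h := hkey z hz
    have hratio : Real.exp (⟪z, γ⟫ - ⟪z, γ'⟫) = a' / a := by
      rw [Real.exp_sub, div_eq_div_iff (Real.exp_ne_zero _) haneg.ne]
      linear_combination h
    have := congrArg Real.log hratio
    rw [Real.log_exp] at this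
    rw [inner_sub_right, hd, ← this]
  have hγd := span_affine_zero hZ (-d) (γ - γ') (fun z hz => by
    rw [hconst z hz]; ring)
  have hγeq : γ = γ' := sub_eq_zero.mp hγd.2
  -- Step E: S₀ = S₀'
  refine ⟨hβ₀eq, hβveq, hγeq, fun t => ?_⟩
  have h := hC z₀ hz₀ t
  rw [hγeq] at h
  exact rpow_base_inj (hS₀ t).1 (hS₀' t).1 (Real.exp_pos _) h
end

section
/- Let m ≥ 1, and let 𝒵 ⊆ ℝᵐ be such that {(1, z) : z ∈ 𝒵} spans ℝ × ℝᵐ. Let γ, γ̃ ∈ ℝᵐ and S₀, S̃₀ : ℝ → ℝ with 0 ≤ S₀(t) ≤ 1 and 0 ≤ S̃₀(t) ≤ 1 for all t, and suppose there exists t₀ with 0 < S₀(t₀) < 1. If S₀(t)^{exp(⟨z, γ⟩)} = S̃₀(t)^{exp(⟨z, γ̃⟩)} for every t ∈ ℝ and every z ∈ 𝒵, then γ = γ̃ and S₀(t) = S̃₀(t) for all t. -/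
open RealInnerProductSpace

/-- Cox proportional hazards identifiability (step d of part A of the proof of Lemma 1):
if `S₀(t)^{exp(⟨z,γ⟩)} = S̃₀(t)^{exp(⟨z,γ̃⟩)}` for all `t` and all `z ∈ 𝒵`, where
`{(1,z) : z ∈ 𝒵}` spans `ℝ × ℝᵐ`, `S₀, S̃₀` take values in `[0,1]`, and `S₀` takes a
value strictly between `0` and `1`, then `γ = γ̃` and `S₀ = S̃₀`. -/
theorem cox_identifiability (m : ℕ) (hm : 1 ≤ m)
    (Z : Set (EuclideanSpace ℝ (Fin m)))
    (hZ : Submodule.span ℝ ((fun z => ((1 : ℝ), z)) '' Z) = ⊤)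
    (γ γ' : EuclideanSpace ℝ (Fin m)) (S₀ S₀' : ℝ → ℝ)
    (hS₀ : ∀ t, 0 ≤ S₀ t ∧ S₀ t ≤ 1) (hS₀' : ∀ t, 0 ≤ S₀' t ∧ S₀' t ≤ 1)
    (ht₀ : ∃ t₀ : ℝ, 0 < S₀ t₀ ∧ S₀ t₀ < 1)
    (heq : ∀ t : ℝ, ∀ z ∈ Z, S₀ t ^ Real.exp ⟪z, γ⟫ = S₀' t ^ Real.exp ⟪z, γ'⟫) :
    γ = γ' ∧ ∀ t, S₀ t = S₀' t := by
  obtain ⟨t₀, h0, h1⟩ := ht₀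
  -- Z is nonempty
  have hZne : Z.Nonempty := by
    by_contra h
    rw [Set.not_nonempty_iff_eq_empty] at h
    simp [h] at hZ
  set a := Real.log (S₀ t₀) with ha
  have ha0 : a < 0 := Real.log_neg h0 h1
  -- S₀' t₀ ∈ (0,1)
  obtain ⟨z₀, hz₀⟩ := hZne
  have hb01 : 0 < S₀' t₀ ∧ S₀' t₀ < 1 := by
    have h := heq t₀ z₀ hz₀
    have hlt1 : S₀ t₀ ^ Real.exp ⟪z₀, γ⟫ < 1 :=
      Real.rpow_lt_one h0.le h1 (Real.exp_pos _)
    have hpos : 0 < S₀ t₀ ^ Real.exp ⟪z₀, γ⟫ := Real.rpow_pos_of_pos h0 _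
    constructor
    · by_contra hb
      push_neg at hb
      have : S₀' t₀ = 0 := le_antisymm hb (hS₀' t₀).1
      rw [this, Real.zero_rpow (Real.exp_ne_zero _)] at h
      exact hpos.ne' h
    · by_contra hb
      push_neg at hb
      have : S₀' t₀ = 1 := le_antisymm (hS₀' t₀).2 hb
      rw [this, Real.one_rpow] at h
      exact hlt1.ne h
  set b := Real.log (S₀' t₀) with hb
  have hb0 : b < 0 := Real.log_neg hb01.1 hb01.2
  -- key relation at t₀: for z ∈ Z, exp⟪z,γ⟫ * a = exp⟪z,γ'⟫ * b
  have hkey : ∀ z ∈ Z, Real.exp ⟪z, γ⟫ * a = Real.exp ⟪z, γ'⟫ * b := by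
    intro z hz
    have h := heq t₀ z hz
    have := congrArg Real.log h
    rwa [Real.log_rpow h0, Real.log_rpow hb01.1] at this
  have hba : 0 < b / a := div_pos_of_neg_of_neg hb0 ha0
  set c := Real.log (b / a) with hc
  -- for z ∈ Z : ⟪z, γ - γ'⟫ = c
  have hc' : ∀ z ∈ Z, ⟪z, γ - γ'⟫ = c := by
    intro z hz
    have h := hkey z hz
    have hexp : Real.exp (⟪z, γ⟫ - ⟪z, γ'⟫) = b / a := by
      rw [Real.exp_sub, div_eq_div_iff (Real.exp_pos _).ne' ha0.ne]
      linarith [h]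
    have := congrArg Real.log hexp
    rw [Real.log_exp] at this
    rw [inner_sub_right, this]
  -- linear functional vanishing on the generators
  let L : (ℝ × EuclideanSpace ℝ (Fin m)) →ₗ[ℝ] ℝ :=
    { toFun := fun p => ⟪p.2, γ - γ'⟫ - c * p.1
      map_add' := by
        intro p q
        simp only [Prod.fst_add, Prod.snd_add, inner_add_left]
        ring
      map_smul' := by
        intro r p
        simp only [Prod.smul_fst, Prod.smul_snd, smul_eq_mul, real_inner_smul_left,
          RingHom.id_apply]
        ring }
  have hLker : Submodule.span ℝ ((fun z => ((1 : ℝ), z)) '' Z) ≤ LinearMap.ker L := by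
    rw [Submodule.span_le]
    rintro x ⟨z, hz, rfl⟩
    simp only [SetLike.mem_coe, LinearMap.mem_ker]
    show ⟪z, γ - γ'⟫ - c * 1 = 0
    rw [hc' z hz]; ring
  rw [hZ, top_le_iff, LinearMap.ker_eq_top] at hLker
  have hL : ∀ p : ℝ × EuclideanSpace ℝ (Fin m), ⟪p.2, γ - γ'⟫ - c * p.1 = 0 := by
    intro p
    exact congrFun (congrArg DFunLike.coe hLker) p
  have hc0 : c = 0 := by
    have := hL (1, 0)
    simpa using this
  have hγ : γ = γ' := by
    have h2 := hL (0, γ - γ')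
    rw [hc0] at h2
    simp only [mul_zero, sub_zero] at h2
    exact sub_eq_zero.mp (inner_self_eq_zero.mp h2)
  refine ⟨hγ, fun t => ?_⟩
  have h := heq t z₀ hz₀
  rw [hγ] at h
  set p := Real.exp ⟪z₀, γ'⟫ with hp
  have hp0 : p ≠ 0 := (Real.exp_pos _).ne'
  have := congrArg (fun u => u ^ p⁻¹) h
  simpa [← Real.rpow_natCast, ← Real.rpow_mul (hS₀ t).1, ← Real.rpow_mul (hS₀' t).1,
    mul_inv_cancel₀ hp0] using this
end

section
/- Let n, m ≥ 1, let 𝒳 ⊆ ℝⁿ be nonempty with span{x − x' : x, x' ∈ 𝒳} = ℝⁿ, and let 𝒵 ⊆ ℝᵐ be nonempty with span{z − z' : z, z' ∈ 𝒵} = ℝᵐ. Let β₀, β̃₀ ∈ ℝ, β, β̃ ∈ ℝⁿ, γ, γ̃ ∈ ℝᵐ, and F₀, F̃₀ : ℝ → ℝ, and suppose there exists t₀ with F₀(t₀) ≠ 0. If exp(β₀ + ⟨x, β⟩ + ⟨z, γ⟩) · F₀(t) = exp(β̃₀ + ⟨x, β̃⟩ + ⟨z, γ̃⟩) · F̃₀(t)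 for every x ∈ 𝒳, z ∈ 𝒵 and t ∈ ℝ, then β = β̃ and γ = γ̃. -/
open RealInnerProductSpace

/-- Positive claim of part 2 of the paper's Lemma 1: in the approximate model
`S_p(t|x,z) = exp(−exp(β₀+⟨x,β⟩+⟨z,γ⟩) F₀(t))`, if the differences of the design
points span the covariate spaces and `F₀` is not identically zero, then the covariate
effects `β` and `γ` are identifiable (even though `β₀` and `F₀` are confounded). -/
theorem covariate_effects_identifiable (n m : ℕ) (hn : 1 ≤ n) (hm : 1 ≤ m)
    (X : Set (EuclideanSpace ℝ (Fin n))) (hXne : X.Nonempty)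
    (hX : Submodule.span ℝ {d : EuclideanSpace ℝ (Fin n) |
      ∃ x ∈ X, ∃ x' ∈ X, d = x - x'} = ⊤)
    (Z : Set (EuclideanSpace ℝ (Fin m))) (hZne : Z.Nonempty)
    (hZ : Submodule.span ℝ {d : EuclideanSpace ℝ (Fin m) |
      ∃ z ∈ Z, ∃ z' ∈ Z, d = z - z'} = ⊤)
    (β₀ β₀' : ℝ) (β β' : EuclideanSpace ℝ (Fin n)) (γ γ' : EuclideanSpace ℝ (Fin m))
    (F₀ F₀' : ℝ → ℝ) (ht₀ : ∃ t₀ : ℝ, F₀ t₀ ≠ 0)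
    (heq : ∀ x ∈ X, ∀ z ∈ Z, ∀ t : ℝ,
      Real.exp (β₀ + ⟪x, β⟫ + ⟪z, γ⟫) * F₀ t =
      Real.exp (β₀' + ⟪x, β'⟫ + ⟪z, γ'⟫) * F₀' t) :
    β = β' ∧ γ = γ' := by
  obtain ⟨t₀, hF⟩ := ht₀
  have hF' : F₀' t₀ ≠ 0 := by
    obtain ⟨x, hx⟩ := hXne
    obtain ⟨z, hz⟩ := hZne
    intro h0
    have := heq x hx z hz t₀
    rw [h0, mul_zero, mul_eq_zero] at this
    rcases this with h | h
    · exact (Real.exp_ne_zero _) h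
    · exact hF h
  -- key: differences of exponents agree
  have key : ∀ x ∈ X, ∀ x' ∈ X, ∀ z ∈ Z, ∀ z' ∈ Z,
      (⟪x, β⟫ + ⟪z, γ⟫) - (⟪x', β⟫ + ⟪z', γ⟫)
        = (⟪x, β'⟫ + ⟪z, γ'⟫) - (⟪x', β'⟫ + ⟪z', γ'⟫) := by
    intro x hx x' hx' z hz z' hz'
    have h1 := heq x hx z hz t₀
    have h2 := heq x' hx' z' hz' t₀
    have h3 : Real.exp (β₀ + ⟪x, β⟫ + ⟪z, γ⟫) * F₀ t₀ *
        (Real.exp (β₀' + ⟪x', β'⟫ + ⟪z', γ'⟫) * F₀' t₀)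
        = Real.exp (β₀' + ⟪x, β'⟫ + ⟪z, γ'⟫) * F₀' t₀ *
        (Real.exp (β₀ + ⟪x', β⟫ + ⟪z', γ⟫) * F₀ t₀) := by
      rw [h1, ← h2]
    have h4 : (Real.exp (β₀ + ⟪x, β⟫ + ⟪z, γ⟫) *
        Real.exp (β₀' + ⟪x', β'⟫ + ⟪z', γ'⟫)) * (F₀ t₀ * F₀' t₀)
        = (Real.exp (β₀' + ⟪x, β'⟫ + ⟪z, γ'⟫) *
        Real.exp (β₀ + ⟪x', β⟫ + ⟪z', γ⟫)) * (F₀ t₀ * F₀' t₀) := by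
      linarith [h3]
    have h5 := mul_right_cancel₀ (mul_ne_zero hF hF') h4
    rw [← Real.exp_add, ← Real.exp_add] at h5
    have h6 := Real.exp_injective h5
    linarith [h6]
  have hβ : ∀ x ∈ X, ∀ x' ∈ X, ⟪x - x', β - β'⟫ = 0 := by
    intro x hx x' hx'
    obtain ⟨z, hz⟩ := hZne
    have := key x hx x' hx' z hz z hz
    simp only [inner_sub_left, inner_sub_right]
    linarith [this]
  have hγ : ∀ z ∈ Z, ∀ z' ∈ Z, ⟪z - z', γ - γ'⟫ = 0 := by
    intro z hz z' hz'
    obtain ⟨x, hx⟩ := hXne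
    have := key x hx x hx z hz z' hz'
    simp only [inner_sub_left, inner_sub_right]
    linarith [this]
  constructor
  · have : ∀ v : EuclideanSpace ℝ (Fin n), ⟪v, β - β'⟫ = 0 := by
      intro v
      have hv : v ∈ Submodule.span ℝ {d : EuclideanSpace ℝ (Fin n) |
          ∃ x ∈ X, ∃ x' ∈ X, d = x - x'} := by rw [hX]; trivial
      induction hv using Submodule.span_induction with
      | mem d hd => obtain ⟨x, hx, x', hx', rfl⟩ := hd; exact hβ x hx x' hx'
      | zero => simp
      | add a b _ _ ha hb => rw [inner_add_left, ha, hb]; ring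
      | smul c a _ ha => rw [inner_smul_left, ha]; simp
    have h0 := this (β - β')
    rw [inner_self_eq_zero, sub_eq_zero] at h0
    exact h0
  · have : ∀ v : EuclideanSpace ℝ (Fin m), ⟪v, γ - γ'⟫ = 0 := by
      intro v
      have hv : v ∈ Submodule.span ℝ {d : EuclideanSpace ℝ (Fin m) |
          ∃ z ∈ Z, ∃ z' ∈ Z, d = z - z'} := by rw [hZ]; trivial
      induction hv using Submodule.span_induction with
      | mem d hd => obtain ⟨z, hz, z', hz', rfl⟩ := hd; exact hγ z hz z' hz'
      | zero => simp
      | add a b _ _ ha hb => rw [inner_add_left, ha, hb]; ring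
      | smul c a _ ha => rw [inner_smul_left, ha]; simp
    have h0 := this (γ - γ')
    rw [inner_self_eq_zero, sub_eq_zero] at h0
    exact h0
end
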